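/- Let G be an unboundaried X-labeled graph and let H be a t-boundaried X-labeled graph. Then H ∈ mpcs_{+(t+1)}(G) if and only if H ∈ mpcs_{+t}(G). -/

import Mathlib

namespace FDel

open scoped Classical

noncomputable section

/-- A boundaried `X`-labeled graph on the vertex universe `ℕ`: a (finite) vertex set,
a symmetric loopless adjacency relation, a labelset for each vertex, and a partial
assignment of boundary indices to vertices. -/
structure BLG (X : Type) where
  verts : Set ℕ
  Adj : ℕ → ℕ → Prop
  label : ℕ → Set X
  bnd : ℕ → Option ℕ

variable {X : Type}

/-- Well-formedness of `G` as a `t`-boundaried `X`-labeled graph: the vertex set is finite,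
adjacency is symmetric, loopless and supported on the vertex set, labels and boundary
indices live on vertices, the boundary assignment is injective, and indices lie in `{1,…,t}`. -/
def BLG.WF (t : ℕ) (G : BLG X) : Prop :=
  G.verts.Finite ∧
  (∀ u v, G.Adj u v → G.Adj v u) ∧
  (∀ v, ¬ G.Adj v v) ∧
  (∀ u v, G.Adj u v → u ∈ G.verts ∧ v ∈ G.verts) ∧
  (∀ v, v ∉ G.verts → G.label v = ∅ ∧ G.bnd v = none) ∧
  (∀ u v i, G.bnd u = some i → G.bnd v = some i → u = v) ∧
  (∀ v i, G.bnd v = some i → v ∈ G.verts ∧ 1 ≤ i ∧ i ≤ t)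

/-- Reachability inside the vertex set `S`. -/
def ReachIn (G : BLG X) (S : Set ℕ) (a b : ℕ) : Prop :=
  Relation.ReflTransGen (fun u v => G.Adj u v ∧ u ∈ S ∧ v ∈ S) a b

/-- `C` is (the vertex set of) a connected component of the subgraph of `G` induced by `S`. -/
def IsCompOf (G : BLG X) (S C : Set ℕ) : Prop :=
  ∃ v ∈ S, C = {w | w ∈ S ∧ ReachIn G S v w}

/-- `G` is connected (and nonempty). -/
def BLG.Conn (G : BLG X) : Prop :=
  G.verts.Nonempty ∧ ∀ a ∈ G.verts, ∀ b ∈ G.verts, ReachIn G G.verts a b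

/-- Isomorphism of boundaried labeled graphs: a bijection of the vertex sets preserving
adjacency, labelsets and boundary indices. -/
def Iso (G G' : BLG X) : Prop :=
  ∃ f : ℕ → ℕ, Set.BijOn f G.verts G'.verts ∧
    (∀ u ∈ G.verts, ∀ v ∈ G.verts, (G.Adj u v ↔ G'.Adj (f u) (f v))) ∧
    (∀ v ∈ G.verts, G'.label (f v) = G.label v) ∧
    (∀ v ∈ G.verts, G'.bnd (f v) = G.bnd v)

/-- A boundaried labeled minor model of `H` in `G`. -/
structure MinorModel (H G : BLG X) (φ : ℕ → Set ℕ) : Prop where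
  sub : ∀ v ∈ H.verts, φ v ⊆ G.verts
  nonempty : ∀ v ∈ H.verts, (φ v).Nonempty
  conn : ∀ v ∈ H.verts, ∀ a ∈ φ v, ∀ b ∈ φ v, ReachIn G (φ v) a b
  disj : ∀ u ∈ H.verts, ∀ v ∈ H.verts, u ≠ v → Disjoint (φ u) (φ v)
  edge : ∀ u ∈ H.verts, ∀ v ∈ H.verts, H.Adj u v → ∃ a ∈ φ u, ∃ b ∈ φ v, G.Adj a b
  bnd_none : ∀ v ∈ H.verts, H.bnd v = none → ∀ a ∈ φ v, G.bnd a = none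
  bnd_some : ∀ v ∈ H.verts, ∀ i, H.bnd v = some i →
    (∀ a ∈ φ v, G.bnd a = none ∨ G.bnd a = some i) ∧ ∃ a ∈ φ v, G.bnd a = some i
  labels : ∀ v ∈ H.verts, ∀ x, x ∈ H.label v → ∃ a ∈ φ v, x ∈ G.label a

/-- `H` is a boundaried labeled minor of `G`. -/
def Minor (H G : BLG X) : Prop := ∃ φ, MinorModel H G φ

/-- Auxiliary injection for the right summand of `⊕`: a vertex of `G2` that is a boundary
vertex whose index also occurs in `G1` is identified with the corresponding vertex of `G1`. -/
def rmap (G1 G2 : BLG X) (v : ℕ) : ℕ :=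
  if h : ∃ u, u ∈ G1.verts ∧ ∃ i, G2.bnd v = some i ∧ G1.bnd u = some i
  then 2 * Classical.choose h
  else 2 * v + 1

/-- The sum `G1 ⊕ G2`: disjoint union with boundary vertices of equal index identified. -/
def glue (G1 G2 : BLG X) : BLG X where
  verts := (fun v => 2 * v) '' G1.verts ∪ rmap G1 G2 '' G2.verts
  Adj a b :=
    (∃ u ∈ G1.verts, ∃ v ∈ G1.verts, G1.Adj u v ∧ a = 2 * u ∧ b = 2 * v) ∨
    (∃ u ∈ G2.verts, ∃ v ∈ G2.verts, G2.Adj u v ∧ a = rmap G1 G2 u ∧ b = rmap G1 G2 v)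
  label x := {l | (∃ v ∈ G1.verts, x = 2 * v ∧ l ∈ G1.label v) ∨
                  (∃ v ∈ G2.verts, x = rmap G1 G2 v ∧ l ∈ G2.label v)}
  bnd x :=
    if x ∈ (fun v => 2 * v) '' G1.verts ∪ rmap G1 G2 '' G2.verts then
      (if x % 2 = 0 then G1.bnd (x / 2) else G2.bnd (x / 2))
    else none

/-- One-vertex piece on vertex `v`, with boundary index `i` and labelset `L`. -/
def singlePc (v i : ℕ) (L : Set X) : BLG X :=
  ⟨{v}, fun _ _ => False, fun x => if x = v then L else ∅,
   fun x => if x = v then some i else none⟩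

/-- Two-vertex piece consisting of the single edge `{u,v}` with boundary indices `i`, `j`. -/
def edgePc (u v i j : ℕ) : BLG X :=
  ⟨{u, v}, fun a b => (a = u ∧ b = v) ∨ (a = v ∧ b = u), fun _ => ∅,
   fun x => if x = u then some i else if x = v then some j else none⟩

/-- The non-boundary vertices of `G`. -/
def interior (G : BLG X) : Set ℕ := {v | v ∈ G.verts ∧ G.bnd v = none}

/-- The piece of `G` corresponding to a connected component `C` of `G − δ(G)`: `C` together
with its neighboring boundary vertices, with edges between boundary vertices removed and all
labels removed from boundary vertices. -/
def compPc (G : BLG X) (C : Set ℕ) : BLG X :=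
  ⟨C ∪ {v | v ∈ G.verts ∧ G.bnd v ≠ none ∧ ∃ c ∈ C, G.Adj v c},
   fun a b => G.Adj a b ∧
     (a ∈ C ∪ {v | v ∈ G.verts ∧ G.bnd v ≠ none ∧ ∃ c ∈ C, G.Adj v c}) ∧
     (b ∈ C ∪ {v | v ∈ G.verts ∧ G.bnd v ≠ none ∧ ∃ c ∈ C, G.Adj v c}) ∧
     ¬(G.bnd a ≠ none ∧ G.bnd b ≠ none),
   fun x => if x ∈ C then G.label x else ∅,
   fun x => if x ∈ C ∪ {v | v ∈ G.verts ∧ G.bnd v ≠ none ∧ ∃ c ∈ C, G.Adj v c}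
            then G.bnd x else none⟩

/-- The set of pieces of `G`. -/
def pcs (G : BLG X) : Set (BLG X) :=
  {p | ∃ v ∈ G.verts, ∃ i, G.bnd v = some i ∧ p = singlePc v i (∅ : Set X)} ∪
  {p | ∃ v ∈ G.verts, ∃ i, G.bnd v = some i ∧ ∃ l ∈ G.label v, p = singlePc v i {l}} ∪
  {p | ∃ u v i j, G.Adj u v ∧ G.bnd u = some i ∧ G.bnd v = some j ∧ p = edgePc u v i j} ∪
  {p | ∃ C, IsCompOf G (interior G) C ∧ p = compPc G C}

/-- The sum `⊕_{p ∈ P} p` of a set of pieces of a common graph; since pieces of a common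
graph overlap exactly in boundary vertices (with equal indices), the sum is the union. -/
def unionOf (P : Set (BLG X)) : BLG X :=
  ⟨⋃ p ∈ P, p.verts,
   fun a b => ∃ p ∈ P, p.Adj a b,
   fun x => ⋃ p ∈ P, p.label x,
   fun x => if h : ∃ p, p ∈ P ∧ p.bnd x ≠ none then (Classical.choose h).bnd x else none⟩

/-- `mpcs(G)`: all sums of nonempty subsets of the pieces of `G`, up to isomorphism. -/
def mpcs (G : BLG X) : Set (BLG X) :=
  {H | ∃ P ⊆ pcs G, P.Nonempty ∧ Iso H (unionOf P)}

/-- `mpcs` of a set of graphs. -/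
def mpcsSet (S : Set (BLG X)) : Set (BLG X) := ⋃ G ∈ S, mpcs G

/-- Assign boundary index `i` to the vertex `v` of `G`. -/
def assignBnd (G : BLG X) (v i : ℕ) : BLG X :=
  ⟨G.verts, G.Adj, G.label, Function.update G.bnd v (some i)⟩

/-- Split the boundary vertex `u` of `G`: add a new vertex `w` with boundary index `i` and
the edge `{u,w}`, reattach the edges `{u,b}` with `ME b` to `w`, and move the labels `l` of
`u` with `ML l` to `w`. -/
def splitVx (G : BLG X) (u w i : ℕ) (ME : ℕ → Prop) (ML : X → Prop) : BLG X :=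
  ⟨insert w G.verts,
   fun a b =>
     (a = w ∧ b = u) ∨ (a = u ∧ b = w) ∨
     (a = w ∧ b ≠ w ∧ G.Adj u b ∧ ME b) ∨ (b = w ∧ a ≠ w ∧ G.Adj u a ∧ ME a) ∨
     (a ≠ w ∧ b ≠ w ∧ G.Adj a b ∧ ¬(a = u ∧ ME b) ∧ ¬(b = u ∧ ME a)),
   fun x => if x = w then {l | l ∈ G.label u ∧ ML l}
            else if x = u then {l | l ∈ G.label u ∧ ¬ ML l}
            else G.label x,
   fun x => if x = w then some i else G.bnd x⟩

/-- One extension step turning a `t`-boundaried graph into a `(t+1)`-boundaried one (up to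
isomorphism): keep the graph unchanged, assign index `t+1` to a non-boundary vertex, or
split a boundary vertex. -/
def ExtOne (t : ℕ) (H H' : BLG X) : Prop :=
  Iso H' H ∨
  (∃ v ∈ H.verts, H.bnd v = none ∧ Iso H' (assignBnd H v (t + 1))) ∨
  (∃ u ∈ H.verts, ∃ i, H.bnd u = some i ∧ ∃ w, w ∉ H.verts ∧
    ∃ ME : ℕ → Prop, ∃ ML : X → Prop, Iso H' (splitVx H u w (t + 1) ME ML))

/-- `H' ∈ ext_{+k}(H)` for a `t`-boundaried graph `H`: `k` successive extension steps. -/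
def ExtN (t : ℕ) : ℕ → BLG X → BLG X → Prop
  | 0, H, H' => Iso H' H
  | k + 1, H, H' => ∃ H'', ExtN t k H H'' ∧ ExtOne (t + k) H'' H'

/-- `ext_{+k}` of a set of `t`-boundaried graphs. -/
def extSet (t k : ℕ) (S : Set (BLG X)) : Set (BLG X) := {H' | ∃ H ∈ S, ExtN t k H H'}

/-- `mpcs_{+t}(S)` for a set `S` of unboundaried graphs. -/
def mpcsPlus (t : ℕ) (S : Set (BLG X)) : Set (BLG X) := mpcsSet (extSet 0 t S)

/-- `forget(G,k)`: forget the boundary status of all boundary vertices with index `> k`. -/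
def forget (G : BLG X) (k : ℕ) : BLG X :=
  ⟨G.verts, G.Adj, G.label, fun v => (G.bnd v).bind fun i => if i ≤ k then some i else none⟩

/-- Membership in a set of graphs, up to isomorphism. -/
def MemIso (H : BLG X) (S : Set (BLG X)) : Prop := ∃ H' ∈ S, Iso H H'

/-- `G1` and `G2` share no edge: no edge between boundary indices `i,j` occurs in both. -/
def EdgeDisjoint (G1 G2 : BLG X) : Prop :=
  ¬ ∃ i j, (∃ u v, G1.Adj u v ∧ G1.bnd u = some i ∧ G1.bnd v = some j) ∧
           (∃ u v, G2.Adj u v ∧ G2.bnd u = some i ∧ G2.bnd v = some j)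

/-- The merge `Π1 ⊙_F Π2`. -/
def Merge (F : Set (BLG X)) (t : ℕ) (P1 P2 : Set (BLG X)) : Set (BLG X) :=
  {G | G ∈ mpcsPlus t F ∧ ∀ G1 G2 : BLG X, G1.WF t → G2.WF t → EdgeDisjoint G1 G2 →
    Iso (glue G1 G2) G →
    (∃ H ∈ P1, Minor H G1) ∨ (∃ H ∈ P2, Minor H G2)}

/-- `(P1, P2) ∈ split_F(P)`: both contain `P`; for every `G ∈ P` and every subset `Y` of its
pieces, the sum over `Y` was added to `P1` or the sum over the complement was added to `P2`;
and every member of `P1`/`P2` is accounted for by one of the two addition rules. -/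
def SplitMem (F : Set (BLG X)) (t : ℕ) (P P1 P2 : Set (BLG X)) : Prop :=
  P ⊆ P1 ∧ P ⊆ P2 ∧
  (∀ G ∈ P, ∀ Y ⊆ pcs G, MemIso (unionOf Y) P1 ∨ MemIso (unionOf (pcs G \ Y)) P2) ∧
  (∀ H ∈ P1, H ∈ P ∨ (∃ G ∈ P, ∃ Y ⊆ pcs G, Iso H (unionOf Y)) ∨
    (H ∈ mpcsPlus t F ∧ ∃ H', Minor H' H ∧ MemIso H' P1)) ∧
  (∀ H ∈ P2, H ∈ P ∨ (∃ G ∈ P, ∃ Y ⊆ pcs G, Iso H (unionOf Y)) ∨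
    (H ∈ mpcsPlus t F ∧ ∃ H', Minor H' H ∧ MemIso H' P2))

/-- `folio*_{Q,t}(G)`: the boundaried labeled minors of `G` lying in `mpcs_{+t}(Q)`. -/
def folioStar (Q : Set (BLG X)) (t : ℕ) (G : BLG X) : Set (BLG X) :=
  {H | H ∈ mpcsPlus t Q ∧ Minor H G}

/-- The `(t+1)`-boundaried graphs in which boundary index `t+1` is assigned to a vertex. -/
def defBnd (t : ℕ) : Set (BLG X) := {G | ∃ v ∈ G.verts, G.bnd v = some t}

/-! ### Auxiliary lemmas for Statement 11 -/

lemma blg_ext {G1 G2 : BLG X} (h1 : G1.verts = G2.verts)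
    (h2 : ∀ a b, G1.Adj a b ↔ G2.Adj a b) (h3 : ∀ x, G1.label x = G2.label x)
    (h4 : ∀ x, G1.bnd x = G2.bnd x) : G1 = G2 := by
  obtain ⟨v1, a1, l1, b1⟩ := G1
  obtain ⟨v2, a2, l2, b2⟩ := G2
  simp only [BLG.mk.injEq]
  exact ⟨h1, funext fun a => funext fun b => propext (h2 a b), funext h3, funext h4⟩

lemma iso_refl (G : BLG X) : Iso G G :=
  ⟨id, Set.bijOn_id _, fun _ _ _ _ => Iff.rfl, fun _ _ => rfl, fun _ _ => rfl⟩

lemma iso_trans {G1 G2 G3 : BLG X} (h12 : Iso G1 G2) (h23 : Iso G2 G3) : Iso G1 G3 := by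
  obtain ⟨f, hf, hfa, hfl, hfb⟩ := h12
  obtain ⟨g, hg, hga, hgl, hgb⟩ := h23
  refine ⟨g ∘ f, hg.comp hf, ?_, ?_, ?_⟩
  · intro u hu v hv
    rw [hfa u hu v hv, hga _ (hf.mapsTo hu) _ (hf.mapsTo hv)]
    rfl
  · intro v hv
    simp only [Function.comp_apply]
    rw [hgl _ (hf.mapsTo hv), hfl v hv]
  · intro v hv
    simp only [Function.comp_apply]
    rw [hgb _ (hf.mapsTo hv), hfb v hv]

/-- Adjacency is symmetric on the vertex set. -/
def Sym (G : BLG X) : Prop := ∀ u v, u ∈ G.verts → v ∈ G.verts → G.Adj u v → G.Adj v u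

/-- No loops on the vertex set. -/
def NoLoop (G : BLG X) : Prop := ∀ v, v ∈ G.verts → ¬ G.Adj v v

lemma sym_of_iso {G2 G1 : BLG X} (h : Iso G2 G1) (hs : Sym G1) : Sym G2 := by
  obtain ⟨f, hf, ha, _, _⟩ := h
  intro u v hu hv huv
  rw [ha v hv u hu]
  exact hs _ _ (hf.mapsTo hu) (hf.mapsTo hv) ((ha u hu v hv).mp huv)

lemma noloop_of_iso {G2 G1 : BLG X} (h : Iso G2 G1) (hs : NoLoop G1) : NoLoop G2 := by
  obtain ⟨f, hf, ha, _, _⟩ := h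
  intro v hv hvv
  exact hs _ (hf.mapsTo hv) ((ha v hv v hv).mp hvv)

lemma sym_splitVx {G : BLG X} {u w i : ℕ} {ME : ℕ → Prop} {ML : X → Prop}
    (hs : Sym G) : Sym (splitVx G u w i ME ML) := by
  intro a b ha hb hab
  rcases hab with ⟨h1, h2⟩ | ⟨h1, h2⟩ | ⟨h1, h2, h3, h4⟩ | ⟨h1, h2, h3, h4⟩ | ⟨h1, h2, h3, h4, h5⟩
  · exact Or.inr (Or.inl ⟨h2, h1⟩)
  · exact Or.inl ⟨h2, h1⟩
  · exact Or.inr (Or.inr (Or.inr (Or.inl ⟨h1, h2, h3, h4⟩)))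
  · exact Or.inr (Or.inr (Or.inl ⟨h1, h2, h3, h4⟩))
  · have ha' : a ∈ G.verts := by
      rcases (Set.mem_insert_iff.mp ha) with h | h
      · exact absurd h h1
      · exact h
    have hb' : b ∈ G.verts := by
      rcases (Set.mem_insert_iff.mp hb) with h | h
      · exact absurd h h2
      · exact h
    exact Or.inr (Or.inr (Or.inr (Or.inr ⟨h2, h1, hs a b ha' hb' h3, h5, h4⟩)))

lemma noloop_splitVx {G : BLG X} {u w i : ℕ} {ME : ℕ → Prop} {ML : X → Prop}
    (hu : u ∈ G.verts) (hw : w ∉ G.verts) (hn : NoLoop G) :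
    NoLoop (splitVx G u w i ME ML) := by
  intro v hv hvv
  have hwu : w ≠ u := fun h => hw (h ▸ hu)
  rcases hvv with ⟨h1, h2⟩ | ⟨h1, h2⟩ | ⟨h1, h2, h3, h4⟩ | ⟨h1, h2, h3, h4⟩ | ⟨h1, h2, h3, h4, h5⟩
  · exact hwu (h1 ▸ h2)
  · exact hwu (h2 ▸ h1)
  · exact h2 h1
  · exact h2 h1
  · have hv' : v ∈ G.verts := by
      rcases (Set.mem_insert_iff.mp hv) with h | h
      · exact absurd h h1
      · exact h
    exact hn v hv' h3

lemma wf_sym {G : BLG X} (h : G.WF 0) : Sym G := fun u v _ _ => h.2.1 u v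

lemma wf_noloop {G : BLG X} (h : G.WF 0) : NoLoop G := fun v _ => h.2.2.1 v

lemma sym_assignBnd {G : BLG X} {v i : ℕ} (hs : Sym G) : Sym (assignBnd G v i) := hs

lemma noloop_assignBnd {G : BLG X} {v i : ℕ} (hs : NoLoop G) : NoLoop (assignBnd G v i) := hs

lemma chain_inv {G : BLG X} (hG : G.WF 0) :
    ∀ k (Gk : BLG X), ExtN 0 k G Gk → Sym Gk ∧ NoLoop Gk := by
  intro k
  induction k with
  | zero =>
    intro Gk h
    exact ⟨sym_of_iso h (wf_sym hG), noloop_of_iso h (wf_noloop hG)⟩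
  | succ k ih =>
    rintro Gk ⟨Gp, h1, h2⟩
    obtain ⟨hsym, hnl⟩ := ih Gp h1
    rcases h2 with h | ⟨v, hv, hb, h⟩ | ⟨u, hu, i, hb, w, hw, ME, ML, h⟩
    · exact ⟨sym_of_iso h hsym, noloop_of_iso h hnl⟩
    · exact ⟨sym_of_iso h (sym_assignBnd hsym), noloop_of_iso h (noloop_assignBnd hnl)⟩
    · exact ⟨sym_of_iso h (sym_splitVx hsym), noloop_of_iso h (noloop_splitVx hu hw hnl)⟩

lemma extOne_iso {s : ℕ} {Gp G' G'' : BLG X} (h : ExtOne s Gp G') (hi : Iso G'' G') :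
    ExtOne s Gp G'' := by
  rcases h with h | ⟨v, hv, hb, h⟩ | ⟨u, hu, i, hb, w, hw, ME, ML, h⟩
  · exact Or.inl (iso_trans hi h)
  · exact Or.inr (Or.inl ⟨v, hv, hb, iso_trans hi h⟩)
  · exact Or.inr (Or.inr ⟨u, hu, i, hb, w, hw, ME, ML, iso_trans hi h⟩)

lemma extN_iso {k : ℕ} {G G' G'' : BLG X} (h : ExtN 0 k G G') (hi : Iso G'' G') :
    ExtN 0 k G G'' := by
  cases k with
  | zero => exact iso_trans hi h
  | succ k =>
    obtain ⟨Gp, h1, h2⟩ := h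
    exact ⟨Gp, h1, extOne_iso h2 hi⟩

lemma pcs_cases {G p : BLG X} (hp : p ∈ pcs G) :
    (∃ v ∈ G.verts, ∃ i, G.bnd v = some i ∧ p = singlePc v i (∅ : Set X)) ∨
    (∃ v ∈ G.verts, ∃ i, G.bnd v = some i ∧ ∃ l ∈ G.label v, p = singlePc v i {l}) ∨
    (∃ u v i j, G.Adj u v ∧ G.bnd u = some i ∧ G.bnd v = some j ∧ p = edgePc u v i j) ∨
    (∃ C, IsCompOf G (interior G) C ∧ p = compPc G C) := by
  simp only [pcs, Set.mem_union, Set.mem_setOf_eq] at hp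
  rcases hp with ((h | h) | h) | h
  · exact Or.inl h
  · exact Or.inr (Or.inl h)
  · exact Or.inr (Or.inr (Or.inl h))
  · exact Or.inr (Or.inr (Or.inr h))

lemma pcs_single {G : BLG X} {v i : ℕ} (hv : v ∈ G.verts) (hb : G.bnd v = some i) :
    singlePc v i (∅ : Set X) ∈ pcs G := by
  simp only [pcs, Set.mem_union, Set.mem_setOf_eq]
  exact Or.inl (Or.inl (Or.inl ⟨v, hv, i, hb, rfl⟩))

lemma pcs_label {G : BLG X} {v i : ℕ} {l : X} (hv : v ∈ G.verts) (hb : G.bnd v = some i)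
    (hl : l ∈ G.label v) : singlePc v i ({l} : Set X) ∈ pcs G := by
  simp only [pcs, Set.mem_union, Set.mem_setOf_eq]
  exact Or.inl (Or.inl (Or.inr ⟨v, hv, i, hb, l, hl, rfl⟩))

lemma pcs_edge {G : BLG X} {u v i j : ℕ} (ha : G.Adj u v) (hu : G.bnd u = some i)
    (hv : G.bnd v = some j) : edgePc u v i j ∈ pcs G := by
  simp only [pcs, Set.mem_union, Set.mem_setOf_eq]
  exact Or.inl (Or.inr ⟨u, v, i, j, ha, hu, hv, rfl⟩)

lemma pcs_comp {G : BLG X} {C : Set ℕ} (h : IsCompOf G (interior G) C) :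
    compPc G C ∈ pcs G := by
  simp only [pcs, Set.mem_union, Set.mem_setOf_eq]
  exact Or.inr ⟨C, h, rfl⟩

lemma pcs_bnd {G p : BLG X} (hp : p ∈ pcs G) {x : ℕ} (hx : p.bnd x ≠ none) :
    x ∈ p.verts ∧ p.bnd x = G.bnd x := by
  rcases pcs_cases hp with ⟨v, hv, i, hb, rfl⟩ | ⟨v, hv, i, hb, l, hl, rfl⟩ |
      ⟨u, v, i, j, ha, hbu, hbv, rfl⟩ | ⟨C, hC, rfl⟩
  · by_cases h : x = v
    · subst h
      exact ⟨rfl, by simp [singlePc, hb]⟩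
    · simp [singlePc, h] at hx
  · by_cases h : x = v
    · subst h
      exact ⟨rfl, by simp [singlePc, hb]⟩
    · simp [singlePc, h] at hx
  · by_cases h : x = u
    · subst h
      exact ⟨Set.mem_insert _ _, by simp [edgePc, hbu]⟩
    · by_cases h' : x = v
      · subst h'
        exact ⟨Set.mem_insert_of_mem _ rfl, by simp [edgePc, h, hbv]⟩
      · simp [edgePc, h, h'] at hx
  · by_cases h : x ∈ (compPc G C).verts
    · refine ⟨h, ?_⟩
      show (if x ∈ _ then G.bnd x else none) = G.bnd x
      exact if_pos h
    · exfalso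
      apply hx
      show (if x ∈ _ then G.bnd x else none) = none
      exact if_neg h

lemma unionOf_bnd_eq {G : BLG X} {P : Set (BLG X)} (hP : P ⊆ pcs G)
    {p : BLG X} (hp : p ∈ P) {x : ℕ} (hx : p.bnd x ≠ none) :
    (unionOf P).bnd x = p.bnd x := by
  have h : ∃ q, q ∈ P ∧ q.bnd x ≠ none := ⟨p, hp, hx⟩
  show (if h : ∃ q, q ∈ P ∧ q.bnd x ≠ none then (Classical.choose h).bnd x else none) = p.bnd x
  rw [dif_pos h]
  have hs := Classical.choose_spec h
  rw [(pcs_bnd (hP hs.1) hs.2).2, (pcs_bnd (hP hp) hx).2]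

lemma avoid_of_wf {t : ℕ} {H Gf : BLG X} {P : Set (BLG X)} (hH : H.WF t)
    (hP : P ⊆ pcs Gf) (hIso : Iso H (unionOf P)) :
    ∀ p ∈ P, ∀ x, p.bnd x ≠ some (t + 1) := by
  intro p hp x hx
  have hne : p.bnd x ≠ none := by rw [hx]; simp
  have hxv : x ∈ p.verts := (pcs_bnd (hP hp) hne).1
  have hxU : x ∈ (unionOf P).verts := Set.mem_biUnion hp hxv
  obtain ⟨f, hf, _, _, hb⟩ := hIso
  obtain ⟨v, hv, rfl⟩ := hf.surjOn hxU
  have h1 : (unionOf P).bnd (f v) = some (t + 1) := by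
    rw [unionOf_bnd_eq hP hp hne, hx]
  have h2 := hb v hv
  rw [h1] at h2
  have := (hH.2.2.2.2.2.2 v (t + 1) h2.symm).2.2
  omega


lemma reachIn_mono {G : BLG X} {S S' : Set ℕ} (h : S ⊆ S') {a b : ℕ}
    (hr : ReachIn G S a b) : ReachIn G S' a b :=
  Relation.ReflTransGen.mono (r := fun u v => G.Adj u v ∧ u ∈ S ∧ v ∈ S)
    (p := fun u v => G.Adj u v ∧ u ∈ S' ∧ v ∈ S') (fun u v hx => ⟨hx.1, h hx.2.1, h hx.2.2⟩) a b hr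

lemma reachIn_congr {G1 G2 : BLG X} {S : Set ℕ}
    (h : ∀ a b, a ∈ S → b ∈ S → (G1.Adj a b ↔ G2.Adj a b)) {a b : ℕ}
    (hr : ReachIn G1 S a b) : ReachIn G2 S a b :=
  Relation.ReflTransGen.mono (r := fun u v => G1.Adj u v ∧ u ∈ S ∧ v ∈ S)
    (p := fun u v => G2.Adj u v ∧ u ∈ S ∧ v ∈ S)
    (fun u v hx => ⟨(h u v hx.2.1 hx.2.2).mp hx.1, hx.2.1, hx.2.2⟩) a b hr

lemma isCompOf_congr {G1 G2 : BLG X} {S C : Set ℕ}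
    (h : ∀ a b, a ∈ S → b ∈ S → (G1.Adj a b ↔ G2.Adj a b))
    (hc : IsCompOf G1 S C) : IsCompOf G2 S C := by
  obtain ⟨v, hv, rfl⟩ := hc
  refine ⟨v, hv, Set.ext fun w => ?_⟩
  simp only [Set.mem_setOf_eq]
  exact ⟨fun hx => ⟨hx.1, reachIn_congr h hx.2⟩,
    fun hx => ⟨hx.1, reachIn_congr (fun a b ha hb => (h a b ha hb).symm) hx.2⟩⟩

lemma comp_insert {Gf : BLG X} {v' : ℕ} (hs : Sym Gf) (hv' : v' ∈ Gf.verts)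
    {S C : Set ℕ} (hSsub : S ⊆ Gf.verts)
    (hC : IsCompOf Gf S C) (hno : ∀ c ∈ C, ¬ Gf.Adj v' c) :
    IsCompOf Gf (insert v' S) C := by
  obtain ⟨v, hv, rfl⟩ := hC
  refine ⟨v, Set.mem_insert_of_mem _ hv, ?_⟩
  ext w
  simp only [Set.mem_setOf_eq, Set.mem_insert_iff]
  constructor
  · rintro ⟨hw, hr⟩
    exact ⟨Or.inr hw, reachIn_mono (Set.subset_insert _ _) hr⟩
  · rintro ⟨hw, hr⟩
    clear hw
    induction hr with
    | refl => exact ⟨hv, Relation.ReflTransGen.refl⟩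
    | tail hab hbc ih =>
      obtain ⟨hbS, hrb⟩ := ih
      obtain ⟨hadj, hbmem, hcmem⟩ := hbc
      rcases (Set.mem_insert_iff.mp hcmem) with rfl | hcS
      · exact absurd (hs _ _ (hSsub hbS) hv' hadj) (hno _ ⟨hbS, hrb⟩)
      · exact ⟨hcS, hrb.tail ⟨hadj, hbS, hcS⟩⟩

lemma compPc_bnd (G : BLG X) (C : Set ℕ) (x : ℕ) :
    (compPc G C).bnd x = if x ∈ (compPc G C).verts then G.bnd x else none := by
  show (if x ∈ C ∪ {v | v ∈ G.verts ∧ G.bnd v ≠ none ∧ ∃ c ∈ C, G.Adj v c}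
      then G.bnd x else none) = _
  exact if_congr Iff.rfl rfl rfl

lemma compPc_label (G : BLG X) (C : Set ℕ) (x : ℕ) :
    (compPc G C).label x = if x ∈ C then G.label x else ∅ := rfl

lemma compPc_adj (G : BLG X) (C : Set ℕ) (a b : ℕ) :
    (compPc G C).Adj a b ↔ (G.Adj a b ∧ a ∈ (compPc G C).verts ∧ b ∈ (compPc G C).verts ∧
      ¬(G.bnd a ≠ none ∧ G.bnd b ≠ none)) := Iff.rfl

lemma mem_compPc_verts {G : BLG X} {C : Set ℕ} {x : ℕ} :
    x ∈ (compPc G C).verts ↔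
      (x ∈ C ∨ (x ∈ G.verts ∧ G.bnd x ≠ none ∧ ∃ c ∈ C, G.Adj x c)) := Iff.rfl

/-- Undo an `assignBnd`: reset the boundary index of `v'` to `none`. -/
def unassign (Gf : BLG X) (v' : ℕ) : BLG X :=
  ⟨Gf.verts, Gf.Adj, Gf.label, Function.update Gf.bnd v' none⟩

lemma unassign_verts (Gf : BLG X) (v' : ℕ) : (unassign Gf v').verts = Gf.verts := rfl
lemma unassign_adj (Gf : BLG X) (v' : ℕ) : (unassign Gf v').Adj = Gf.Adj := rfl
lemma unassign_label (Gf : BLG X) (v' : ℕ) : (unassign Gf v').label = Gf.label := rfl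
lemma unassign_bnd (Gf : BLG X) (v' : ℕ) :
    (unassign Gf v').bnd = Function.update Gf.bnd v' none := rfl

lemma interior_unassign {Gf : BLG X} {v' : ℕ} (hv : v' ∈ Gf.verts) :
    interior (unassign Gf v') = insert v' (interior Gf) := by
  ext x
  simp only [interior, unassign_verts, unassign_bnd, Set.mem_setOf_eq, Set.mem_insert_iff]
  by_cases h : x = v'
  · subst h
    simp [hv]
  · rw [Function.update_of_ne h]
    simp [h]

lemma transfer_assign {Gf : BLG X} {v' j : ℕ} (hs : Sym Gf)
    (hv : v' ∈ Gf.verts) (hb : Gf.bnd v' = some j)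
    {p : BLG X} (hp : p ∈ pcs Gf) (hav : ∀ x, p.bnd x ≠ some j) :
    p ∈ pcs (unassign Gf v') := by
  rcases pcs_cases hp with ⟨x, hx, i, hbx, rfl⟩ | ⟨x, hx, i, hbx, l, hl, rfl⟩ |
      ⟨a, b, i, i', hadj, hba, hbb, rfl⟩ | ⟨C, hC, rfl⟩
  · have hij : i ≠ j := by
      have h1 := hav x
      simp [singlePc] at h1
      exact h1
    have hxv : x ≠ v' := by
      intro he
      rw [he, hb] at hbx
      exact hij (Option.some.inj hbx).symm
    exact pcs_single (G := unassign Gf v') hx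
      (by rw [unassign_bnd, Function.update_of_ne hxv, hbx])
  · have hij : i ≠ j := by
      have h1 := hav x
      simp [singlePc] at h1
      exact h1
    have hxv : x ≠ v' := by
      intro he
      rw [he, hb] at hbx
      exact hij (Option.some.inj hbx).symm
    exact pcs_label (G := unassign Gf v') hx
      (by rw [unassign_bnd, Function.update_of_ne hxv, hbx]) hl
  · have hia : i ≠ j := by
      have h1 := hav a
      simp [edgePc] at h1
      exact h1
    have hane : a ≠ v' := by
      intro he
      rw [he, hb] at hba
      exact hia (Option.some.inj hba).symm
    have hbne : b ≠ v' := by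
      intro he
      by_cases hab : b = a
      · exact hane (hab ▸ he)
      · have h1 := hav b
        simp [edgePc, hab] at h1
        rw [he, hb] at hbb
        exact h1 (Option.some.inj hbb).symm
    exact pcs_edge (G := unassign Gf v') hadj
      (by rw [unassign_bnd, Function.update_of_ne hane, hba])
      (by rw [unassign_bnd, Function.update_of_ne hbne, hbb])
  · have hVnot : v' ∉ (compPc Gf C).verts := by
      intro hmem
      apply hav v'
      rw [compPc_bnd, if_pos hmem, hb]
    have hnoC : v' ∉ C := fun h => hVnot (mem_compPc_verts.mpr (Or.inl h))
    have hnoadj : ∀ c ∈ C, ¬ Gf.Adj v' c := fun c hc hadj =>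
      hVnot (mem_compPc_verts.mpr (Or.inr ⟨hv, by rw [hb]; simp, c, hc, hadj⟩))
    have hxne : ∀ x : ℕ, x ∈ (compPc Gf C).verts → x ≠ v' := by
      intro x hx he
      rw [he] at hx
      exact hVnot hx
    have hVn : ∀ x : ℕ, x ∈ (compPc (unassign Gf v') C).verts ↔ x ∈ (compPc Gf C).verts := by
      intro x
      rw [mem_compPc_verts, mem_compPc_verts]
      simp only [unassign_verts, unassign_bnd, unassign_adj]
      by_cases hx : x = v'
      · subst hx
        constructor
        · rintro (h | ⟨_, h, _⟩)
          · exact absurd h hnoC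
          · rw [Function.update_self] at h
            exact absurd rfl h
        · rintro (h | ⟨_, _, c, hc, hadj⟩)
          · exact absurd h hnoC
          · exact absurd hadj (hnoadj c hc)
      · rw [Function.update_of_ne hx]
    have heq : compPc (unassign Gf v') C = compPc Gf C := by
      apply blg_ext (Set.ext hVn)
      · intro a b
        rw [compPc_adj, compPc_adj]
        simp only [unassign_adj, unassign_bnd]
        constructor
        · rintro ⟨h1, h2, h3, h4⟩
          have h2' := (hVn a).mp h2
          have h3' := (hVn b).mp h3
          rw [Function.update_of_ne (hxne a h2'), Function.update_of_ne (hxne b h3')] at h4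
          exact ⟨h1, h2', h3', h4⟩
        · rintro ⟨h1, h2, h3, h4⟩
          refine ⟨h1, (hVn a).mpr h2, (hVn b).mpr h3, ?_⟩
          rw [Function.update_of_ne (hxne a h2), Function.update_of_ne (hxne b h3)]
          exact h4
      · intro x
        rw [compPc_label, compPc_label, unassign_label]
      · intro x
        rw [compPc_bnd, compPc_bnd]
        by_cases hx : x ∈ (compPc Gf C).verts
        · rw [if_pos ((hVn x).mpr hx), if_pos hx, unassign_bnd,
            Function.update_of_ne (hxne x hx)]
        · rw [if_neg (fun hh => hx ((hVn x).mp hh)), if_neg hx]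
    have hcomp' : IsCompOf (unassign Gf v') (interior (unassign Gf v')) C := by
      rw [interior_unassign hv]
      have hSsub : interior Gf ⊆ Gf.verts := fun x hx => hx.1
      have h2 : IsCompOf Gf (insert v' (interior Gf)) C :=
        comp_insert hs hv hSsub hC hnoadj
      exact isCompOf_congr (fun a b _ _ => Iff.rfl) h2
    exact heq ▸ pcs_comp hcomp'


/-- Undo a `splitVx`: merge the split vertex `w'` back into `u'`. -/
def unsplit (Gf : BLG X) (u' w' : ℕ) : BLG X :=
  ⟨Gf.verts \ {w'},
   fun a b => a ≠ w' ∧ b ≠ w' ∧ (Gf.Adj a b ∨ (a = u' ∧ b ≠ u' ∧ Gf.Adj w' b) ∨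
     (b = u' ∧ a ≠ u' ∧ Gf.Adj a w')),
   fun x => if x = u' then Gf.label u' ∪ Gf.label w' else Gf.label x,
   fun x => if x = w' then none else Gf.bnd x⟩

lemma unsplit_verts (Gf : BLG X) (u' w' : ℕ) :
    (unsplit Gf u' w').verts = Gf.verts \ {w'} := rfl

lemma unsplit_adj (Gf : BLG X) (u' w' a b : ℕ) :
    (unsplit Gf u' w').Adj a b ↔ (a ≠ w' ∧ b ≠ w' ∧ (Gf.Adj a b ∨
      (a = u' ∧ b ≠ u' ∧ Gf.Adj w' b) ∨ (b = u' ∧ a ≠ u' ∧ Gf.Adj a w'))) := Iff.rfl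

lemma unsplit_label (Gf : BLG X) (u' w' x : ℕ) :
    (unsplit Gf u' w').label x =
      if x = u' then Gf.label u' ∪ Gf.label w' else Gf.label x := rfl

lemma unsplit_bnd (Gf : BLG X) (u' w' x : ℕ) :
    (unsplit Gf u' w').bnd x = if x = w' then none else Gf.bnd x := rfl

lemma transfer_split {Gf : BLG X} {u' w' i₀ j : ℕ} (hs : Sym Gf)
    (hu : u' ∈ Gf.verts) (hw : w' ∈ Gf.verts) (hbu : Gf.bnd u' = some i₀)
    (hbw : Gf.bnd w' = some j) (hne : u' ≠ w')
    {p : BLG X} (hp : p ∈ pcs Gf) (hav : ∀ x, p.bnd x ≠ some j) :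
    p ∈ pcs (unsplit Gf u' w') := by
  rcases pcs_cases hp with ⟨x, hx, i, hbx, rfl⟩ | ⟨x, hx, i, hbx, l, hl, rfl⟩ |
      ⟨a, b, i, i', hadj, hba, hbb, rfl⟩ | ⟨C, hC, rfl⟩
  · have hij : i ≠ j := by
      have h1 := hav x
      simp [singlePc] at h1
      exact h1
    have hxw : x ≠ w' := by
      intro he
      rw [he, hbw] at hbx
      exact hij (Option.some.inj hbx).symm
    exact pcs_single (G := unsplit Gf u' w') ⟨hx, fun hh => hxw hh⟩
      (by rw [unsplit_bnd, if_neg hxw, hbx])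
  · have hij : i ≠ j := by
      have h1 := hav x
      simp [singlePc] at h1
      exact h1
    have hxw : x ≠ w' := by
      intro he
      rw [he, hbw] at hbx
      exact hij (Option.some.inj hbx).symm
    refine pcs_label (G := unsplit Gf u' w') ⟨hx, fun hh => hxw hh⟩
      (by rw [unsplit_bnd, if_neg hxw, hbx]) ?_
    rw [unsplit_label]
    by_cases hxu : x = u'
    · rw [if_pos hxu]
      exact Set.mem_union_left _ (hxu ▸ hl)
    · rw [if_neg hxu]
      exact hl
  · have hia : i ≠ j := by
      have h1 := hav a
      simp [edgePc] at h1
      exact h1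
    have haw : a ≠ w' := by
      intro he
      rw [he, hbw] at hba
      exact hia (Option.some.inj hba).symm
    have hbw2 : b ≠ w' := by
      intro he
      by_cases hab : b = a
      · exact haw (hab ▸ he)
      · have h1 := hav b
        simp [edgePc, hab] at h1
        rw [he, hbw] at hbb
        exact h1 (Option.some.inj hbb).symm
    exact pcs_edge (G := unsplit Gf u' w') ⟨haw, hbw2, Or.inl hadj⟩
      (by rw [unsplit_bnd, if_neg haw, hba])
      (by rw [unsplit_bnd, if_neg hbw2, hbb])
  · have hVnot : w' ∉ (compPc Gf C).verts := by
      intro hmem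
      apply hav w'
      rw [compPc_bnd, if_pos hmem, hbw]
    have hnoadj : ∀ c ∈ C, ¬ Gf.Adj w' c := fun c hc hadj =>
      hVnot (mem_compPc_verts.mpr (Or.inr ⟨hw, by rw [hbw]; simp, c, hc, hadj⟩))
    have hCsub : C ⊆ interior Gf := by
      obtain ⟨v0, hv0, he⟩ := hC
      rw [he]
      intro y hy
      exact hy.1
    have hCw : ∀ c ∈ C, c ≠ w' := by
      intro c hc he
      have h2 := (hCsub hc).2
      rw [he, hbw] at h2
      simp at h2
    have hCu : ∀ c ∈ C, c ≠ u' := by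
      intro c hc he
      have h2 := (hCsub hc).2
      rw [he, hbu] at h2
      simp at h2
    have hxne : ∀ x : ℕ, x ∈ (compPc Gf C).verts → x ≠ w' := by
      intro x hx he
      rw [he] at hx
      exact hVnot hx
    have hint : interior (unsplit Gf u' w') = interior Gf := by
      ext x
      simp only [interior, unsplit_verts, Set.mem_setOf_eq, Set.mem_diff,
        Set.mem_singleton_iff]
      rw [unsplit_bnd]
      by_cases hxw : x = w'
      · subst hxw
        simp [hbw]
      · rw [if_neg hxw]
        tauto
    have hadjS : ∀ a b, a ∈ interior Gf → b ∈ interior Gf →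
        (Gf.Adj a b ↔ (unsplit Gf u' w').Adj a b) := by
      intro a b ha hb
      have haw : a ≠ w' := by
        intro he
        have h2 := ha.2
        rw [he, hbw] at h2
        simp at h2
      have hbw2 : b ≠ w' := by
        intro he
        have h2 := hb.2
        rw [he, hbw] at h2
        simp at h2
      have hau : a ≠ u' := by
        intro he
        have h2 := ha.2
        rw [he, hbu] at h2
        simp at h2
      have hbu2 : b ≠ u' := by
        intro he
        have h2 := hb.2
        rw [he, hbu] at h2
        simp at h2
      rw [unsplit_adj]
      constructor
      · intro h
        exact ⟨haw, hbw2, Or.inl h⟩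
      · rintro ⟨_, _, h | ⟨h1, _, _⟩ | ⟨h1, _, _⟩⟩
        · exact h
        · exact absurd h1 hau
        · exact absurd h1 hbu2
    have hcomp' : IsCompOf (unsplit Gf u' w') (interior (unsplit Gf u' w')) C := by
      rw [hint]
      exact isCompOf_congr hadjS hC
    have hVn : ∀ x : ℕ, x ∈ (compPc (unsplit Gf u' w') C).verts ↔
        x ∈ (compPc Gf C).verts := by
      intro x
      rw [mem_compPc_verts, mem_compPc_verts]
      constructor
      · rintro (h | ⟨hxv, hxb, c, hc, hxc⟩)
        · exact Or.inl h
        · obtain ⟨hxv', hxw⟩ := hxv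
          have hxw' : x ≠ w' := fun he => hxw he
          rw [unsplit_bnd, if_neg hxw'] at hxb
          obtain ⟨_, _, hd⟩ := hxc
          rcases hd with h | ⟨h1, h2, h3⟩ | ⟨h1, h2, h3⟩
          · exact Or.inr ⟨hxv', hxb, c, hc, h⟩
          · exact absurd h3 (hnoadj c hc)
          · exact absurd h1 (hCu c hc)
      · rintro (h | ⟨hxv, hxb, c, hc, hxc⟩)
        · exact Or.inl h
        · have hxw' : x ≠ w' := fun he => hnoadj c hc (he ▸ hxc)
          refine Or.inr ⟨⟨hxv, fun hh => hxw' hh⟩, ?_, c, hc,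
            ⟨hxw', hCw c hc, Or.inl hxc⟩⟩
          rw [unsplit_bnd, if_neg hxw']
          exact hxb
    have heq : compPc (unsplit Gf u' w') C = compPc Gf C := by
      apply blg_ext (Set.ext hVn)
      · intro a b
        rw [compPc_adj, compPc_adj]
        constructor
        · rintro ⟨h1, h2, h3, h4⟩
          have h2' := (hVn a).mp h2
          have h3' := (hVn b).mp h3
          have haw : a ≠ w' := hxne a h2'
          have hbw2 : b ≠ w' := hxne b h3'
          rw [unsplit_bnd, unsplit_bnd, if_neg haw, if_neg hbw2] at h4
          refine ⟨?_, h2', h3', h4⟩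
          obtain ⟨_, _, hd⟩ := h1
          rcases hd with h | ⟨he1, he2, he3⟩ | ⟨he1, he2, he3⟩
          · exact h
          · exfalso
            have hba' : Gf.bnd a ≠ none := by rw [he1, hbu]; simp
            have hbb' : Gf.bnd b = none := by
              by_contra hcc
              exact h4 ⟨hba', hcc⟩
            have hbC : b ∈ C := by
              rcases mem_compPc_verts.mp h3' with h | ⟨_, hbb'', _⟩
              · exact h
              · exact absurd hbb' hbb''
            exact hnoadj b hbC he3
          · exfalso
            have hbb' : Gf.bnd b ≠ none := by rw [he1, hbu]; simp
            have hba' : Gf.bnd a = none := by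
              by_contra hcc
              exact h4 ⟨hcc, hbb'⟩
            have haC : a ∈ C := by
              rcases mem_compPc_verts.mp h2' with h | ⟨_, hba'', _⟩
              · exact h
              · exact absurd hba' hba''
            have haV : a ∈ Gf.verts := (hCsub haC).1
            exact hnoadj a haC (hs a w' haV hw he3)
        · rintro ⟨h1, h2, h3, h4⟩
          have haw : a ≠ w' := hxne a h2
          have hbw2 : b ≠ w' := hxne b h3
          refine ⟨⟨haw, hbw2, Or.inl h1⟩, (hVn a).mpr h2, (hVn b).mpr h3, ?_⟩
          rw [unsplit_bnd, unsplit_bnd, if_neg haw, if_neg hbw2]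
          exact h4
      · intro x
        rw [compPc_label, compPc_label]
        by_cases hxC : x ∈ C
        · rw [if_pos hxC, if_pos hxC, unsplit_label, if_neg (hCu x hxC)]
        · rw [if_neg hxC, if_neg hxC]
      · intro x
        rw [compPc_bnd, compPc_bnd]
        by_cases hx : x ∈ (compPc Gf C).verts
        · rw [if_pos ((hVn x).mpr hx), if_pos hx, unsplit_bnd, if_neg (hxne x hx)]
        · rw [if_neg (fun hh => hx ((hVn x).mp hh)), if_neg hx]
    exact heq ▸ pcs_comp hcomp'


lemma undo_assign {Gf Gp : BLG X} {v j : ℕ}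
    (hv : v ∈ Gp.verts) (hbv : Gp.bnd v = none)
    (hiso : Iso Gf (assignBnd Gp v j)) :
    ∃ v', v' ∈ Gf.verts ∧ Gf.bnd v' = some j ∧ Iso (unassign Gf v') Gp := by
  obtain ⟨f, hf, hfa, hfl, hfb⟩ := hiso
  have hvA : v ∈ (assignBnd Gp v j).verts := hv
  obtain ⟨v', hv', hfv'⟩ := hf.surjOn hvA
  have hbv' : Gf.bnd v' = some j := by
    have h1 := hfb v' hv'
    rw [hfv'] at h1
    have h2 : (assignBnd Gp v j).bnd v = some j := by
      show Function.update Gp.bnd v (some j) v = some j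
      rw [Function.update_self]
    rw [h2] at h1
    exact h1.symm
  refine ⟨v', hv', hbv', f, hf, hfa, hfl, ?_⟩
  intro x hx
  by_cases hxx : x = v'
  · subst hxx
    rw [hfv', unassign_bnd, Function.update_self, hbv]
  · have hfx : f x ≠ v := by
      intro he
      exact hxx (hf.injOn hx hv' (he.trans hfv'.symm))
    have h2 := hfb x hx
    have h3 : (assignBnd Gp v j).bnd (f x) = Gp.bnd (f x) := by
      show Function.update Gp.bnd v (some j) (f x) = _
      rw [Function.update_of_ne hfx]
    rw [h3] at h2
    rw [unassign_bnd, Function.update_of_ne hxx]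
    exact h2

lemma undo_split {Gf Gp : BLG X} {u w j i₀ : ℕ} {ME : ℕ → Prop} {ML : X → Prop}
    (hu : u ∈ Gp.verts) (hbu : Gp.bnd u = some i₀) (hw : w ∉ Gp.verts)
    (hsp : Sym Gp) (hnp : NoLoop Gp)
    (hiso : Iso Gf (splitVx Gp u w j ME ML)) :
    ∃ u' w', u' ∈ Gf.verts ∧ w' ∈ Gf.verts ∧ u' ≠ w' ∧
      Gf.bnd u' = some i₀ ∧ Gf.bnd w' = some j ∧ Iso (unsplit Gf u' w') Gp := by
  obtain ⟨f, hf, hfa, hfl, hfb⟩ := hiso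
  have hwu : w ≠ u := fun h => hw (h ▸ hu)
  have huS : u ∈ (splitVx Gp u w j ME ML).verts := Set.mem_insert_of_mem _ hu
  have hwS : w ∈ (splitVx Gp u w j ME ML).verts := Set.mem_insert _ _
  obtain ⟨u', hu', hfu'⟩ := hf.surjOn huS
  obtain ⟨w', hw', hfw'⟩ := hf.surjOn hwS
  have hne : u' ≠ w' := fun h => hwu (by rw [← hfw', ← h, hfu'])
  have hbw' : Gf.bnd w' = some j := by
    have h1 := hfb w' hw'
    rw [hfw'] at h1
    have h2 : (splitVx Gp u w j ME ML).bnd w = some j := by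
      show (if w = w then some j else Gp.bnd w) = some j
      rw [if_pos rfl]
    rw [h2] at h1
    exact h1.symm
  have hbu'2 : Gf.bnd u' = some i₀ := by
    have h1 := hfb u' hu'
    rw [hfu'] at h1
    have h2 : (splitVx Gp u w j ME ML).bnd u = some i₀ := by
      show (if u = w then some j else Gp.bnd u) = some i₀
      rw [if_neg (fun h => hwu h.symm), hbu]
    rw [h2] at h1
    exact h1.symm
  have hinj : ∀ x ∈ Gf.verts, f x = w → x = w' := by
    intro x hx he
    exact hf.injOn hx hw' (he.trans hfw'.symm)
  refine ⟨u', w', hu', hw', hne, hbu'2, hbw', f, ?_, ?_, ?_, ?_⟩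
  · refine ⟨?_, hf.injOn.mono Set.diff_subset, ?_⟩
    · intro x hx
      have hfx : f x ∈ insert w Gp.verts := hf.mapsTo hx.1
      have hxw : x ≠ w' := fun he => hx.2 he
      have hfxw : f x ≠ w := fun he => hxw (hinj x hx.1 he)
      rcases Set.mem_insert_iff.mp hfx with h | h
      · exact absurd h hfxw
      · exact h
    · intro y hy
      obtain ⟨x, hx, hfx⟩ := hf.surjOn (Set.mem_insert_of_mem _ hy)
      refine ⟨x, ⟨hx, fun hh => ?_⟩, hfx⟩
      have hyw : y = w := by rw [← hfx, (show x = w' from hh), hfw']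
      exact hw (hyw ▸ hy)
  · intro a ha b hb
    obtain ⟨haV, haw0⟩ := ha
    obtain ⟨hbV, hbw0⟩ := hb
    have haw' : a ≠ w' := fun he => haw0 he
    have hbw'' : b ≠ w' := fun he => hbw0 he
    have hfaw : f a ≠ w := fun he => haw' (hinj a haV he)
    have hfbw : f b ≠ w := fun he => hbw'' (hinj b hbV he)
    have hfaV : f a ∈ Gp.verts := by
      rcases Set.mem_insert_iff.mp (hf.mapsTo haV) with h | h
      · exact absurd h hfaw
      · exact h
    have hfbV : f b ∈ Gp.verts := by
      rcases Set.mem_insert_iff.mp (hf.mapsTo hbV) with h | h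
      · exact absurd h hfbw
      · exact h
    have hau : a = u' ↔ f a = u := by
      constructor
      · rintro rfl
        exact hfu'
      · intro he
        exact hf.injOn haV hu' (he.trans hfu'.symm)
    have hbu3 : b = u' ↔ f b = u := by
      constructor
      · rintro rfl
        exact hfu'
      · intro he
        exact hf.injOn hbV hu' (he.trans hfu'.symm)
    have hAab : Gf.Adj a b ↔ (Gp.Adj (f a) (f b) ∧ ¬(f a = u ∧ ME (f b)) ∧
        ¬(f b = u ∧ ME (f a))) := by
      rw [hfa a haV b hbV]
      constructor
      · rintro (⟨h1, h2⟩ | ⟨h1, h2⟩ | ⟨h1, h2, h3, h4⟩ | ⟨h1, h2, h3, h4⟩ | ⟨h1, h2, h3, h4, h5⟩)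
        · exact absurd h1 hfaw
        · exact absurd h2 hfbw
        · exact absurd h1 hfaw
        · exact absurd h1 hfbw
        · exact ⟨h3, h4, h5⟩
      · rintro ⟨h1, h2, h3⟩
        exact Or.inr (Or.inr (Or.inr (Or.inr ⟨hfaw, hfbw, h1, h2, h3⟩)))
    have hAwb : Gf.Adj w' b ↔ (f b = u ∨ (Gp.Adj u (f b) ∧ ME (f b))) := by
      rw [hfa w' hw' b hbV, hfw']
      constructor
      · rintro (⟨h1, h2⟩ | ⟨h1, h2⟩ | ⟨h1, h2, h3, h4⟩ | ⟨h1, h2, h3, h4⟩ | ⟨h1, h2, h3, h4, h5⟩)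
        · exact Or.inl h2
        · exact absurd h1 hwu
        · exact Or.inr ⟨h3, h4⟩
        · exact absurd rfl h2
        · exact absurd rfl h1
      · rintro (h | ⟨h1, h2⟩)
        · exact Or.inl ⟨rfl, h⟩
        · exact Or.inr (Or.inr (Or.inl ⟨rfl, hfbw, h1, h2⟩))
    have hAaw : Gf.Adj a w' ↔ (f a = u ∨ (Gp.Adj u (f a) ∧ ME (f a))) := by
      rw [hfa a haV w' hw', hfw']
      constructor
      · rintro (⟨h1, h2⟩ | ⟨h1, h2⟩ | ⟨h1, h2, h3, h4⟩ | ⟨h1, h2, h3, h4⟩ | ⟨h1, h2, h3, h4, h5⟩)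
        · exact absurd h1 hfaw
        · exact Or.inl h1
        · exact absurd h1 hfaw
        · exact Or.inr ⟨h3, h4⟩
        · exact absurd rfl h2
      · rintro (h | ⟨h1, h2⟩)
        · exact Or.inr (Or.inl ⟨h, rfl⟩)
        · exact Or.inr (Or.inr (Or.inr (Or.inl ⟨rfl, hfaw, h1, h2⟩)))
    rw [unsplit_adj]
    constructor
    · rintro ⟨_, _, hd⟩
      rcases hd with h | ⟨h1, h2, h3⟩ | ⟨h1, h2, h3⟩
      · exact (hAab.mp h).1
      · have hfa' : f a = u := hau.mp h1
        have hfb' : f b ≠ u := fun he => h2 (hbu3.mpr he)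
        rcases hAwb.mp h3 with h | ⟨h4, _⟩
        · exact absurd h hfb'
        · rw [hfa']
          exact h4
      · have hfb' : f b = u := hbu3.mp h1
        have hfa'' : f a ≠ u := fun he => h2 (hau.mpr he)
        rcases hAaw.mp h3 with h | ⟨h4, _⟩
        · exact absurd h hfa''
        · rw [hfb']
          exact hsp u (f a) hu hfaV h4
    · intro h
      refine ⟨haw', hbw'', ?_⟩
      by_cases hfau : f a = u
      · by_cases hfbu : f b = u
        · exfalso
          rw [hfau, hfbu] at h
          exact hnp u hu h
        · by_cases hme : ME (f b)
          · refine Or.inr (Or.inl ⟨hau.mpr hfau, fun he => hfbu (hbu3.mp he),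
              hAwb.mpr (Or.inr ⟨?_, hme⟩)⟩)
            rw [← hfau]
            exact h
          · exact Or.inl (hAab.mpr ⟨h, fun hx => hme hx.2, fun hx => hfbu hx.1⟩)
      · by_cases hfbu : f b = u
        · by_cases hme : ME (f a)
          · refine Or.inr (Or.inr ⟨hbu3.mpr hfbu, fun he => hfau (hau.mp he),
              hAaw.mpr (Or.inr ⟨?_, hme⟩)⟩)
            rw [hfbu] at h
            exact hsp (f a) u hfaV hu h
          · exact Or.inl (hAab.mpr ⟨h, fun hx => hfau hx.1, fun hx => hme hx.2⟩)
        · exact Or.inl (hAab.mpr ⟨h, fun hx => hfau hx.1, fun hx => hfbu hx.1⟩)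
  · intro x hx
    obtain ⟨hxV, hxw0⟩ := hx
    have hxw' : x ≠ w' := fun he => hxw0 he
    have hfxw : f x ≠ w := fun he => hxw' (hinj x hxV he)
    have hl1 := hfl x hxV
    by_cases hxu : x = u'
    · rw [unsplit_label, if_pos hxu, hxu]
      have h1 := hfl u' hu'
      rw [hfu'] at h1
      have h2 := hfl w' hw'
      rw [hfw'] at h2
      have e1 : (splitVx Gp u w j ME ML).label u = {l | l ∈ Gp.label u ∧ ¬ ML l} := by
        show (if u = w then _ else if u = u then _ else _) = _
        rw [if_neg (fun h => hwu h.symm), if_pos rfl]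
      have e2 : (splitVx Gp u w j ME ML).label w = {l | l ∈ Gp.label u ∧ ML l} := by
        show (if w = w then _ else _) = _
        rw [if_pos rfl]
      rw [e1] at h1
      rw [e2] at h2
      rw [hfu', ← h1, ← h2]
      ext l
      simp only [Set.mem_union, Set.mem_setOf_eq]
      tauto
    · rw [unsplit_label, if_neg hxu]
      have hfxu : f x ≠ u := fun he => hxu (hf.injOn hxV hu' (he.trans hfu'.symm))
      have e : (splitVx Gp u w j ME ML).label (f x) = Gp.label (f x) := by
        show (if f x = w then _ else if f x = u then _ else _) = _
        rw [if_neg hfxw, if_neg hfxu]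
      rw [← hl1, e]
  · intro x hx
    obtain ⟨hxV, hxw0⟩ := hx
    have hxw' : x ≠ w' := fun he => hxw0 he
    have hfxw : f x ≠ w := fun he => hxw' (hinj x hxV he)
    have h1 := hfb x hxV
    have e : (splitVx Gp u w j ME ML).bnd (f x) = Gp.bnd (f x) := by
      show (if f x = w then some j else Gp.bnd (f x)) = _
      rw [if_neg hfxw]
    rw [unsplit_bnd, if_neg hxw', ← h1, e]


/-- For an unboundaried `X`-labeled graph `G` and a `t`-boundaried
`X`-labeled graph `H`: `H ∈ mpcs_{+(t+1)}(G)` iff `H ∈ mpcs_{+t}(G)`. -/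
theorem stmt11 {X : Type} (t : ℕ) (G H : BLG X) (hG : G.WF 0) (hH : H.WF t) :
    H ∈ mpcsPlus (t + 1) {G} ↔ H ∈ mpcsPlus t {G} := by
  have hmem_iff : ∀ (k : ℕ) (H' : BLG X), H' ∈ mpcsPlus k {G} ↔
      ∃ Gk, ExtN 0 k G Gk ∧ H' ∈ mpcs Gk := by
    intro k H'
    simp only [mpcsPlus, mpcsSet, extSet, Set.mem_iUnion, exists_prop, Set.mem_setOf_eq,
      Set.mem_singleton_iff]
    constructor
    · rintro ⟨Gk, ⟨G0, rfl, hext⟩, hm⟩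
      exact ⟨Gk, hext, hm⟩
    · rintro ⟨Gk, hext, hm⟩
      exact ⟨Gk, ⟨G, rfl, hext⟩, hm⟩
  rw [hmem_iff, hmem_iff]
  constructor
  · rintro ⟨Gf, hext, hmem⟩
    obtain ⟨hsymGf, hnlGf⟩ := chain_inv hG (t + 1) Gf hext
    obtain ⟨Gp, hchain, hone⟩ := hext
    rw [Nat.zero_add] at hone
    obtain ⟨P, hPsub, hPne, hIso⟩ := hmem
    have havoid := avoid_of_wf hH hPsub hIso
    rcases hone with hiso | ⟨v, hv, hbv, hisoA⟩ | ⟨u, hu, i₀, hbu, w, hw, ME, ML, hisoS⟩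
    · exact ⟨Gf, extN_iso hchain hiso, P, hPsub, hPne, hIso⟩
    · obtain ⟨v', hv', hbv', hisoU⟩ := undo_assign hv hbv hisoA
      refine ⟨unassign Gf v', extN_iso hchain hisoU, P, ?_, hPne, hIso⟩
      intro p hp
      exact transfer_assign hsymGf hv' hbv' (hPsub hp) (havoid p hp)
    · obtain ⟨hsymGp, hnlGp⟩ := chain_inv hG t Gp hchain
      obtain ⟨u', w', hu', hw', hne, hbu', hbw', hisoU⟩ :=
        undo_split hu hbu hw hsymGp hnlGp hisoS
      refine ⟨unsplit Gf u' w', extN_iso hchain hisoU, P, ?_, hPne, hIso⟩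
      intro p hp
      exact transfer_split hsymGf hu' hw' hbu' hbw' hne (hPsub hp) (havoid p hp)
  · rintro ⟨G', hchain, hmem⟩
    exact ⟨G', ⟨G', hchain, Or.inl (iso_refl G')⟩, hmem⟩

end

end FDel
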